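/- If c = (c_1,...,c_n) is a Catalan composition, i.e. Σ_{i≤k} c_i ≥ k for all k < n and Σ_i c_i = n−1, then the divided symmetrization of the Catalan monomial x^c equals 1: ⟨x_1^{c_1}···x_n^{c_n}⟩_n = 1. -/

import Mathlib

section DividedSymAux

open Finset Polynomial

variable {F : Type*} [Field F] [DecidableEq F]

/-- Key Lagrange identity: sum of `a^r` times nodal weights. -/
lemma lagrange_sum_pow (S : Finset F) (r : ℕ) (hr : r < S.card) :
    ∑ a ∈ S, a ^ r * (∏ b ∈ S.erase a, (a - b))⁻¹
      = if r = S.card - 1 then 1 else 0 := by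
  have hinj : Set.InjOn id (S : Set F) := Set.injOn_id _
  have hdeg : (X ^ r : F[X]).degree < S.card := by
    rw [degree_X_pow]; exact_mod_cast hr
  have h := Lagrange.eq_interpolate (s := S) (v := id) hinj hdeg
  have h2 := congrArg (fun p : F[X] => p.coeff (S.card - 1)) h
  simp only [Lagrange.interpolate_apply, finset_sum_coeff, coeff_C_mul,
    coeff_X_pow, eval_pow, eval_X, id] at h2
  have hb : ∀ a ∈ S, (Lagrange.basis S id a).coeff (S.card - 1)
      = (∏ b ∈ S.erase a, (a - b))⁻¹ := by
    intro a ha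
    have hbasis : Lagrange.basis S id a
        = C (∏ b ∈ S.erase a, (a - b)⁻¹) * Lagrange.nodal (S.erase a) id := by
      rw [Lagrange.basis, Lagrange.nodal, map_prod, ← prod_mul_distrib]
      rfl
    have hmon : (Lagrange.nodal (S.erase a) id).Monic := Lagrange.nodal_monic
    have hdeg' : (Lagrange.nodal (S.erase a) id).natDegree = S.card - 1 := by
      rw [Lagrange.natDegree_nodal, card_erase_of_mem ha]
    rw [hbasis, coeff_C_mul, ← hdeg', hmon.coeff_natDegree, mul_one, prod_inv_distrib]
  rw [Finset.sum_congr rfl (fun a ha => by rw [hb a ha])] at h2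
  rw [← h2]
  simp [eq_comm]

/-- Partial fraction identity: `z^r/∏(z-a) = Σ_a a^r/((z-a)∏_{b≠a}(a-b))` for `r < |S|`. -/
lemma partial_fractions (S : Finset F) (z : F) (hz : z ∉ S) (r : ℕ) (hr : r < S.card) :
    ∑ a ∈ S, a ^ r / ((z - a) * ∏ b ∈ S.erase a, (a - b))
      = z ^ r / ∏ a ∈ S, (z - a) := by
  have hcard : (insert z S).card = S.card + 1 := card_insert_of_notMem hz
  have h := lagrange_sum_pow (insert z S) r (by omega)
  rw [hcard] at h
  rw [if_neg (by omega)] at h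
  rw [Finset.sum_insert hz, Finset.erase_insert hz] at h
  have hterm : ∀ a ∈ S, a ^ r * (∏ b ∈ (insert z S).erase a, (a - b))⁻¹
      = -(a ^ r / ((z - a) * ∏ b ∈ S.erase a, (a - b))) := by
    intro a ha
    have haz : z ≠ a := fun h' => hz (h' ▸ ha)
    rw [Finset.erase_insert_of_ne haz,
      Finset.prod_insert (fun h' => hz (Finset.mem_of_mem_erase h'))]
    have : a - z = -(z - a) := by ring
    rw [this, neg_mul, inv_neg, div_eq_mul_inv]
    ring
  rw [Finset.sum_congr rfl hterm, Finset.sum_neg_distrib] at h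
  rw [div_eq_mul_inv]
  linear_combination -h

/-- The chain denominator `(z - g 0)(g 0 - g 1) ⋯ (g (m-2) - g (m-1))`. -/
def chainD : {m : ℕ} → F → (Fin m → F) → F
  | 0, _, _ => 1
  | _ + 1, z, g => (z - g 0) * chainD (g 0) (fun i => g i.succ)

@[simp] lemma chainD_zero (z : F) (g : Fin 0 → F) : chainD z g = 1 := rfl

lemma chainD_succ {m : ℕ} (z : F) (g : Fin (m + 1) → F) :
    chainD z g = (z - g 0) * chainD (g 0) (fun i => g i.succ) := rfl

lemma sum_filter_succ {M : Type*} [AddCommMonoid M] (m : ℕ) (f : Fin (m + 1) → M)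
    (k : ℕ) (hk : 1 ≤ k) :
    ∑ j ∈ Finset.univ.filter (fun j : Fin (m + 1) => k ≤ j.1), f j
      = ∑ i ∈ Finset.univ.filter (fun i : Fin m => k ≤ i.1 + 1), f i.succ := by
  rw [Finset.sum_filter, Finset.sum_filter, Fin.sum_univ_succ]
  simp only [Fin.val_zero, Fin.val_succ]
  simp [show ¬ k ≤ 0 by omega]

lemma image_tail {m : ℕ} (y : Fin (m + 1) → F) (hy : Function.Injective y)
    (p : Fin (m + 1)) :
    Finset.image (fun i : Fin m => y (Equiv.swap 0 p i.succ)) Finset.univ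
      = (Finset.image y Finset.univ).erase (y p) := by
  ext b
  simp only [Finset.mem_image, Finset.mem_erase, Finset.mem_univ, true_and]
  constructor
  · rintro ⟨i, rfl⟩
    refine ⟨fun h => ?_, ⟨Equiv.swap 0 p i.succ, rfl⟩⟩
    have h2 : Equiv.swap 0 p i.succ = p := hy h
    have h3 : Equiv.swap 0 p (0 : Fin (m + 1)) = p := Equiv.swap_apply_left 0 p
    have := (Equiv.swap 0 p).injective (h2.trans h3.symm)
    exact Fin.succ_ne_zero i this
  · rintro ⟨hb, j, rfl⟩
    have hjp : j ≠ p := fun h => hb (by rw [h])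
    have hj0 : Equiv.swap 0 p j ≠ 0 := by
      intro h
      apply hjp
      have := (Equiv.swap 0 p).injective (α := Fin (m + 1))
        (a₁ := j) (a₂ := p) ?_
      · exact this
      · rw [h, Equiv.swap_apply_right]
    refine ⟨(Equiv.swap 0 p j).pred hj0, ?_⟩
    congr 1
    rw [Fin.succ_pred]
    exact (Equiv.swap_apply_self 0 p j)

lemma wlem : ∀ (m : ℕ) (y : Fin m → F), Function.Injective y → ∀ z : F, (∀ i, z ≠ y i) →
    ∀ d : Fin m → ℕ,
    (∀ k : ℕ, k < m → ∑ i ∈ Finset.univ.filter (fun i : Fin m => k ≤ i.1), d i < m - k) →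
    ∑ w : Equiv.Perm (Fin m), (∏ i, y (w i) ^ d i) / chainD z (y ∘ w)
      = z ^ (∑ i, d i) / ∏ i, (z - y i) := by
  intro m
  induction m with
  | zero =>
    intro y hy z hz d hd
    simp
  | succ m ih =>
    intro y hy z hz d hd
    rw [← Equiv.sum_comp (Equiv.Perm.decomposeFin).symm
      (fun w : Equiv.Perm (Fin (m + 1)) => (∏ i, y (w i) ^ d i) / chainD z (y ∘ w)),
      Fintype.sum_prod_type]
    have key : ∀ p : Fin (m + 1),
        ∑ σ : Equiv.Perm (Fin m),
          (∏ i, y ((Equiv.Perm.decomposeFin.symm (p, σ)) i) ^ d i) /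
            chainD z (y ∘ (Equiv.Perm.decomposeFin.symm (p, σ)))
        = y p ^ (∑ i, d i) /
            ((z - y p) * ∏ b ∈ (Finset.image y Finset.univ).erase (y p), (y p - b)) := by
      intro p
      set y' : Fin m → F := fun j => y (Equiv.swap 0 p j.succ) with hy'
      have hy'inj : Function.Injective y' :=
        hy.comp ((Equiv.swap 0 p).injective.comp (Fin.succ_injective m))
      have hzy' : ∀ i, y p ≠ y' i := by
        intro i h
        have h2 : p = Equiv.swap 0 p i.succ := hy h
        have h3 : Equiv.swap 0 p (0 : Fin (m + 1)) = p := Equiv.swap_apply_left 0 p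
        exact Fin.succ_ne_zero i ((Equiv.swap 0 p).injective (h3.trans h2).symm)
      have hd' : ∀ k : ℕ, k < m →
          ∑ i ∈ Finset.univ.filter (fun i : Fin m => k ≤ i.1), d i.succ < m - k := by
        intro k hk
        have h1 := hd (k + 1) (by omega)
        rw [sum_filter_succ m d (k + 1) (by omega)] at h1
        have h2 : (Finset.univ.filter (fun i : Fin m => k + 1 ≤ i.1 + 1))
            = Finset.univ.filter (fun i : Fin m => k ≤ i.1) := by
          apply Finset.filter_congr; intro i _; simp [Nat.succ_le_succ_iff]
        rw [h2] at h1
        omega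
      have hterm : ∀ σ : Equiv.Perm (Fin m),
          (∏ i, y ((Equiv.Perm.decomposeFin.symm (p, σ)) i) ^ d i) /
            chainD z (y ∘ (Equiv.Perm.decomposeFin.symm (p, σ)))
          = (y p ^ d 0 / (z - y p)) *
            ((∏ i, y' (σ i) ^ d i.succ) / chainD (y p) (y' ∘ σ)) := by
        intro σ
        have h0 : (y ∘ (Equiv.Perm.decomposeFin.symm (p, σ))) 0 = y p := by
          simp [Equiv.Perm.decomposeFin_symm_apply_zero]
        have htail : (fun i : Fin m => (y ∘ (Equiv.Perm.decomposeFin.symm (p, σ))) i.succ)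
            = y' ∘ σ := by
          funext i
          simp [Equiv.Perm.decomposeFin_symm_apply_succ, hy']
        rw [chainD_succ, h0, htail, Fin.prod_univ_succ]
        have h1 : y ((Equiv.Perm.decomposeFin.symm (p, σ)) 0) = y p := h0
        rw [h1]
        have h2 : ∀ i : Fin m, y ((Equiv.Perm.decomposeFin.symm (p, σ)) i.succ) = y' (σ i) := by
          intro i
          simp [Equiv.Perm.decomposeFin_symm_apply_succ, hy']
        rw [Finset.prod_congr rfl (fun i _ => by rw [h2 i])]
        rw [mul_div_mul_comm]
      rw [Finset.sum_congr rfl (fun σ _ => hterm σ), ← Finset.mul_sum]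
      rw [ih y' hy'inj (y p) hzy' (fun i => d i.succ) hd']
      rw [div_mul_div_comm, ← pow_add, ← Fin.sum_univ_succ]
      congr 2
      rw [← image_tail y hy p, Finset.prod_image]
      intro a _ b _ h
      exact hy'inj h
    rw [Finset.sum_congr rfl (fun p _ => key p)]
    have hS : ∑ p : Fin (m + 1), y p ^ (∑ i, d i) /
        ((z - y p) * ∏ b ∈ (Finset.image y Finset.univ).erase (y p), (y p - b))
        = ∑ a ∈ Finset.image y Finset.univ, a ^ (∑ i, d i) /
        ((z - a) * ∏ b ∈ (Finset.image y Finset.univ).erase a, (a - b)) := by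
      rw [Finset.sum_image (fun a _ b _ h => hy h)]
    rw [hS, partial_fractions _ z ?_ _ ?_]
    · rw [Finset.prod_image (fun a _ b _ h => hy h)]
    · intro h
      obtain ⟨i, _, hi⟩ := Finset.mem_image.mp h
      exact hz i hi.symm
    · rw [Finset.card_image_of_injective _ hy, Finset.card_fin]
      have := hd 0 (by omega)
      simpa using this

lemma chain_prod : ∀ (m : ℕ) (u : Fin (m + 1) → F),
    ∏ i : Fin m, (u i.castSucc - u i.succ) = chainD (u 0) (fun i => u i.succ) := by
  intro m
  induction m with
  | zero => intro u; simp
  | succ m ih =>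
    intro u
    rw [Fin.prod_univ_succ, chainD_succ]
    have h1 : ∀ i : Fin m, u i.succ.castSucc = (fun j : Fin (m + 1) => u j.succ) i.castSucc := by
      intro i; rfl
    rw [Finset.prod_congr rfl (fun i _ => by rw [h1 i])]
    have h2 := ih (fun j : Fin (m + 1) => u j.succ)
    simp only [Fin.castSucc_zero, Fin.succ_zero_eq_one] at *
    rw [h2]

lemma main_catalan (m : ℕ) (y : Fin (m + 1) → F) (hy : Function.Injective y)
    (c : Fin (m + 1) → ℕ)
    (hcat : ∀ k, 1 ≤ k → k < m + 1 →
      k ≤ ∑ i ∈ Finset.univ.filter (fun i : Fin (m + 1) => i.1 < k), c i)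
    (hsum : ∑ i, c i = m) :
    ∑ w : Equiv.Perm (Fin (m + 1)),
      (∏ i, y (w i) ^ c i) / chainD (y (w 0)) (fun i => y (w i.succ)) = 1 := by
  rw [← Equiv.sum_comp (Equiv.Perm.decomposeFin).symm
    (fun w : Equiv.Perm (Fin (m + 1)) =>
      (∏ i, y (w i) ^ c i) / chainD (y (w 0)) (fun i => y (w i.succ))),
    Fintype.sum_prod_type]
  have key : ∀ p : Fin (m + 1),
      ∑ σ : Equiv.Perm (Fin m),
        (∏ i, y ((Equiv.Perm.decomposeFin.symm (p, σ)) i) ^ c i) /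
          chainD (y ((Equiv.Perm.decomposeFin.symm (p, σ)) 0))
            (fun i => y ((Equiv.Perm.decomposeFin.symm (p, σ)) i.succ))
      = y p ^ m * (∏ b ∈ (Finset.image y Finset.univ).erase (y p), (y p - b))⁻¹ := by
    intro p
    set y' : Fin m → F := fun j => y (Equiv.swap 0 p j.succ) with hy'
    have hy'inj : Function.Injective y' :=
      hy.comp ((Equiv.swap 0 p).injective.comp (Fin.succ_injective m))
    have hzy' : ∀ i, y p ≠ y' i := by
      intro i h
      have h2 : p = Equiv.swap 0 p i.succ := hy h
      have h3 : Equiv.swap 0 p (0 : Fin (m + 1)) = p := Equiv.swap_apply_left 0 p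
      exact Fin.succ_ne_zero i ((Equiv.swap 0 p).injective (h3.trans h2).symm)
    have hd' : ∀ k : ℕ, k < m →
        ∑ i ∈ Finset.univ.filter (fun i : Fin m => k ≤ i.1), c i.succ < m - k := by
      intro k hk
      have h1 := hcat (k + 1) (by omega) (by omega)
      have hsplit := Finset.sum_filter_add_sum_filter_not Finset.univ
        (fun j : Fin (m + 1) => j.1 < k + 1) c
      have h2 : Finset.univ.filter (fun j : Fin (m + 1) => ¬ j.1 < k + 1)
          = Finset.univ.filter (fun j : Fin (m + 1) => k + 1 ≤ j.1) := by
        apply Finset.filter_congr; intro j _; simpa using by omega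
      rw [h2, hsum] at hsplit
      rw [sum_filter_succ m c (k + 1) (by omega)] at hsplit
      have h3 : (Finset.univ.filter (fun i : Fin m => k + 1 ≤ i.1 + 1))
          = Finset.univ.filter (fun i : Fin m => k ≤ i.1) := by
        apply Finset.filter_congr; intro i _; simp [Nat.succ_le_succ_iff]
      rw [h3] at hsplit
      omega
    have hterm : ∀ σ : Equiv.Perm (Fin m),
        (∏ i, y ((Equiv.Perm.decomposeFin.symm (p, σ)) i) ^ c i) /
          chainD (y ((Equiv.Perm.decomposeFin.symm (p, σ)) 0))
            (fun i => y ((Equiv.Perm.decomposeFin.symm (p, σ)) i.succ))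
        = y p ^ c 0 * ((∏ i, y' (σ i) ^ c i.succ) / chainD (y p) (y' ∘ σ)) := by
      intro σ
      have h0 : y ((Equiv.Perm.decomposeFin.symm (p, σ)) 0) = y p := by
        simp [Equiv.Perm.decomposeFin_symm_apply_zero]
      have h2 : ∀ i : Fin m, y ((Equiv.Perm.decomposeFin.symm (p, σ)) i.succ) = y' (σ i) := by
        intro i
        simp [Equiv.Perm.decomposeFin_symm_apply_succ, hy']
      have htail : (fun i : Fin m => y ((Equiv.Perm.decomposeFin.symm (p, σ)) i.succ))
          = y' ∘ σ := funext h2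
      rw [h0, htail, Fin.prod_univ_succ, h0,
        Finset.prod_congr rfl (fun i _ => by rw [h2 i]), mul_div_assoc]
    rw [Finset.sum_congr rfl (fun σ _ => hterm σ), ← Finset.mul_sum]
    rw [wlem m y' hy'inj (y p) hzy' (fun i => c i.succ) hd']
    rw [← image_tail y hy p, Finset.prod_image (fun a _ b _ h => hy'inj h)]
    rw [div_eq_mul_inv, ← mul_assoc, ← pow_add, ← Fin.sum_univ_succ, hsum]
  rw [Finset.sum_congr rfl (fun p _ => key p)]
  rw [show (∑ p : Fin (m + 1), y p ^ m *
      (∏ b ∈ (Finset.image y Finset.univ).erase (y p), (y p - b))⁻¹)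
    = ∑ a ∈ Finset.image y Finset.univ, a ^ m *
      (∏ b ∈ (Finset.image y Finset.univ).erase a, (a - b))⁻¹ from
    (Finset.sum_image (g := y) (s := (Finset.univ : Finset (Fin (m + 1))))
      (f := fun a : F => a ^ m * (∏ b ∈ (Finset.image y Finset.univ).erase a, (a - b))⁻¹)
      (fun a _ b _ h => hy h)).symm]
  have hcard : (Finset.image y Finset.univ).card = m + 1 := by
    rw [Finset.card_image_of_injective _ hy, Finset.card_fin]
  rw [lagrange_sum_pow _ m (by omega), hcard, if_pos (by omega)]

end DividedSymAux


open MvPolynomial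

/-- The denominator `∏_{i=1}^{n-1} (x_i - x_{i+1})` of divided symmetrization. -/
noncomputable def denomDS (n : ℕ) : MvPolynomial (Fin n) ℚ :=
  ∏ i : Fin (n - 1),
    (X (⟨i.1, by have := i.isLt; omega⟩ : Fin n) - X ⟨i.1 + 1, by have := i.isLt; omega⟩)

/-- Divided symmetrization `⟨f⟩_n = Σ_{w ∈ S_n} w·(f / ∏ (x_i - x_{i+1}))`, as an element of
the fraction field of `ℚ[x_1,...,x_n]`. -/
noncomputable def DS (n : ℕ) (f : MvPolynomial (Fin n) ℚ) :
    FractionRing (MvPolynomial (Fin n) ℚ) :=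
  ∑ w : Equiv.Perm (Fin n),
    algebraMap (MvPolynomial (Fin n) ℚ) _ (rename w f) /
      algebraMap (MvPolynomial (Fin n) ℚ) _ (rename w (denomDS n))

/-- If `c` is a Catalan composition (partial sums `≥ k`, total `n-1`), then the
divided symmetrization of the Catalan monomial `x^c` equals `1`. -/
theorem stmt10 (n : ℕ) (c : Fin n → ℕ)
    (hcat : ∀ k, 1 ≤ k → k < n →
      k ≤ ∑ i ∈ Finset.univ.filter (fun i : Fin n => i.1 < k), c i)
    (hsum : ∑ i, c i = n - 1) :
    DS n (∏ i, X i ^ c i) = 1 := by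
  classical
  cases n with
  | zero =>
    rw [DS]
    have : ∀ w : Equiv.Perm (Fin 0),
        algebraMap (MvPolynomial (Fin 0) ℚ) (FractionRing (MvPolynomial (Fin 0) ℚ))
          (rename w (∏ i, X i ^ c i)) /
        algebraMap (MvPolynomial (Fin 0) ℚ) _ (rename w (denomDS 0)) = 1 := by
      intro w
      have h1 : (∏ i, X i ^ c i : MvPolynomial (Fin 0) ℚ) = 1 := by simp
      have h2 : denomDS 0 = 1 := by simp [denomDS]
      rw [h1, h2]; simp
    rw [Finset.sum_congr rfl (fun w _ => this w)]
    simp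
  | succ m =>
    set K := FractionRing (MvPolynomial (Fin (m + 1)) ℚ)
    set y : Fin (m + 1) → K := fun i => algebraMap (MvPolynomial (Fin (m + 1)) ℚ) K (X i)
      with hy_def
    have hy : Function.Injective y := by
      intro a b h
      exact MvPolynomial.X_injective
        (IsFractionRing.injective (MvPolynomial (Fin (m + 1)) ℚ) K h)
    have hnum : ∀ w : Equiv.Perm (Fin (m + 1)),
        algebraMap (MvPolynomial (Fin (m + 1)) ℚ) K (rename w (∏ i, X i ^ c i))
          = ∏ i, y (w i) ^ c i := by
      intro w
      rw [map_prod, map_prod]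
      exact Finset.prod_congr rfl (fun i _ => by rw [map_pow, map_pow, rename_X])
    have hden : ∀ w : Equiv.Perm (Fin (m + 1)),
        algebraMap (MvPolynomial (Fin (m + 1)) ℚ) K (rename w (denomDS (m + 1)))
          = chainD (y (w 0)) (fun i => y (w i.succ)) := by
      intro w
      rw [← chain_prod m (fun j => y (w j))]
      rw [denomDS, map_prod, map_prod]
      refine Finset.prod_congr rfl (fun i _ => ?_)
      rw [map_sub, map_sub, rename_X, rename_X]
      have e1 : (⟨i.1, by have := i.isLt; omega⟩ : Fin (m + 1)) = i.castSucc := rfl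
      have e2 : (⟨i.1 + 1, by have := i.isLt; omega⟩ : Fin (m + 1)) = i.succ := rfl
      rw [e1, e2]
    rw [DS, Finset.sum_congr rfl (fun w _ => by rw [hnum w, hden w])]
    exact main_catalan m y hy c hcat hsum
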